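/- Let K be a real symmetric positive definite matrix given in block form K = fromBlocks K_ii K_ib K_bi K_bb (with K_bi = K_ibᵀ), let Q be a symmetric positive semidefinite matrix on the boundary indices, let S := K_bb − K_bi · K_ii⁻¹ · K_ib, and let t denote restriction to the boundary block. Then for every vector f with interior part f_i and boundary part f_b, one has (S + Q) · (t (K + tᵀQt)⁻¹ f) = f_b − K_bi · K_ii⁻¹ · f_i; that is, the primal condensed right-hand side b_p := f_b − K_bi K_ii⁻¹ f_i and the mixed condensed right-hand side b_m := t (K + tᵀQt)⁻¹ f are related by b_p = (S + Q) b_m. -/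

import Mathlib

open Matrix

/-- For a real symmetric positive definite block matrix `K` and a symmetric
positive semidefinite boundary impedance `Q`, the primal condensed right-hand side
`b_p = f_b − K_bi K_ii⁻¹ f_i` and the mixed condensed right-hand side
`b_m = t (K + tᵀQt)⁻¹ f` satisfy `b_p = (S + Q) b_m`, where
`S = K_bb − K_bi K_ii⁻¹ K_ib`. -/
theorem stmt_1 {ι β : Type*} [Fintype ι] [Fintype β] [DecidableEq ι] [DecidableEq β]
    (Kii : Matrix ι ι ℝ) (Kib : Matrix ι β ℝ) (Kbi : Matrix β ι ℝ) (Kbb : Matrix β β ℝ)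
    (Q : Matrix β β ℝ)
    (hKbi : Kbi = Kibᵀ)
    (hK : (fromBlocks Kii Kib Kbi Kbb).PosDef)
    (hQsym : Qᵀ = Q)
    (hQ : Q.PosSemidef)
    (f : ι ⊕ β → ℝ) :
    (Kbb - Kbi * Kii⁻¹ * Kib + Q) *ᵥ
        (fun x => (((fromBlocks Kii Kib Kbi Kbb + fromBlocks 0 0 0 Q)⁻¹) *ᵥ f) (Sum.inr x))
      = (fun x => f (Sum.inr x)) - Kbi *ᵥ (Kii⁻¹ *ᵥ fun x => f (Sum.inl x)) := by
  -- the perturbation tᵀQt is positive semidefinite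
  have hQt : (fromBlocks (0 : Matrix ι ι ℝ) 0 0 Q).PosSemidef := by
    rw [posSemidef_iff_dotProduct_mulVec]
    constructor
    · unfold Matrix.IsHermitian
      rw [fromBlocks_conjTranspose]
      simp [hQsym]
    · intro x
      have h := (posSemidef_iff_dotProduct_mulVec.mp hQ).2 (x ∘ Sum.inr)
      simpa [fromBlocks_mulVec, dotProduct, Fintype.sum_sum_type] using h
  -- the perturbed matrix is positive definite, hence invertible
  have hM : (fromBlocks Kii Kib Kbi Kbb + fromBlocks 0 0 0 Q).PosDef :=
    hK.add_posSemidef hQt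
  have hMdet : IsUnit (fromBlocks Kii Kib Kbi Kbb + fromBlocks 0 0 0 Q).det :=
    hM.det_pos.ne'.isUnit
  -- Kii is positive definite, hence invertible
  have hKii : Kii.PosDef := by
    rw [posDef_iff_dotProduct_mulVec]
    constructor
    · have h := hK.1
      unfold Matrix.IsHermitian at h ⊢
      rw [fromBlocks_conjTranspose] at h
      have h2 := congrArg Matrix.toBlocks₁₁ h
      simpa [Matrix.toBlocks_fromBlocks₁₁] using h2
    · intro x hx
      have hx' : (Sum.elim x 0 : ι ⊕ β → ℝ) ≠ 0 := by
        intro h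
        apply hx
        ext i
        exact congrFun h (Sum.inl i)
      have h := (posDef_iff_dotProduct_mulVec.mp hK).2 (x := Sum.elim x 0) hx'
      simpa [fromBlocks_mulVec, dotProduct, Fintype.sum_sum_type] using h
  have hKiidet : IsUnit Kii.det := hKii.det_pos.ne'.isUnit
  set g : ι ⊕ β → ℝ := (fromBlocks Kii Kib Kbi Kbb + fromBlocks 0 0 0 Q)⁻¹ *ᵥ f with hg
  have hMg : (fromBlocks Kii Kib Kbi Kbb + fromBlocks 0 0 0 Q) *ᵥ g = f := by
    rw [hg, mulVec_mulVec, mul_nonsing_inv _ hMdet, one_mulVec]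
  rw [fromBlocks_add, fromBlocks_mulVec] at hMg
  simp only [add_zero, zero_add] at hMg
  have h1 : Kii *ᵥ (g ∘ Sum.inl) + Kib *ᵥ (g ∘ Sum.inr) = f ∘ Sum.inl := by
    ext i; exact congrFun hMg (Sum.inl i)
  have h2 : Kbi *ᵥ (g ∘ Sum.inl) + (Kbb + Q) *ᵥ (g ∘ Sum.inr) = f ∘ Sum.inr := by
    ext i; exact congrFun hMg (Sum.inr i)
  have hgi : Kii⁻¹ *ᵥ (f ∘ Sum.inl) = g ∘ Sum.inl + Kii⁻¹ *ᵥ (Kib *ᵥ (g ∘ Sum.inr)) := by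
    rw [← h1, mulVec_add, mulVec_mulVec, nonsing_inv_mul _ hKiidet, one_mulVec]
  have hfb : (fun x => f (Sum.inr x)) = f ∘ Sum.inr := rfl
  have hfi : (fun x => f (Sum.inl x)) = f ∘ Sum.inl := rfl
  have hgb : (fun x => g (Sum.inr x)) = g ∘ Sum.inr := rfl
  show (Kbb - Kbi * Kii⁻¹ * Kib + Q) *ᵥ (fun x => g (Sum.inr x))
      = (fun x => f (Sum.inr x)) - Kbi *ᵥ (Kii⁻¹ *ᵥ fun x => f (Sum.inl x))
  rw [hfb, hfi, hgb, hgi, ← h2]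
  simp only [add_mulVec, sub_mulVec, mulVec_add, ← mulVec_mulVec]
  abel
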